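/- Let Σ be a countable monoid, μ a probability measure on Σ, B a measurable space equipped with a measurable action of Σ, and λ a probability measure on B such that the pushforward g_*λ is absolutely continuous with respect to λ for every g ∈ Σ, and λ is μ-stationary: λ = ∑_{h∈Σ} μ(h) h_*λ. Then for λ-almost every ξ ∈ B and every g ∈ Σ, d(g_*λ)/dλ(ξ) = ∑_{h∈Σ} μ(h) · d((gh)_*λ)/dλ(ξ); that is, for λ-a.e. ξ the function u^ξ(g) := d(g_*λ)/dλ(ξ) is μ-harmonic on Σ. -/
import Mathlib

open MeasureTheory

namespace Stmt18

theorem rnDeriv_stationary_harmonic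
    {M : Type*} [Monoid M] [Countable M] [MeasurableSpace M] [MeasurableSingletonClass M]
    (μ : Measure M) [IsProbabilityMeasure μ]
    {B : Type*} [MeasurableSpace B] [MulAction M B]
    (hact : ∀ m : M, Measurable (fun ξ : B => m • ξ))
    (lam : Measure B) [IsProbabilityMeasure lam]
    (habs : ∀ m : M, Measure.map (fun ξ : B => m • ξ) lam ≪ lam)
    (hstat : lam = Measure.sum (fun h : M => μ {h} • Measure.map (fun ξ : B => h • ξ) lam)) :
    ∀ᵐ ξ ∂lam, ∀ m : M,
      (Measure.map (fun ξ : B => m • ξ) lam).rnDeriv lam ξ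
        = ∑' h : M, μ {h} * (Measure.map (fun ξ : B => (m * h) • ξ) lam).rnDeriv lam ξ := by
  rw [ae_all_iff]
  intro m
  -- the key measure identity: m_*λ = ∑_h μ{h} • (mh)_*λ
  have hmap : Measure.map (fun ξ : B => m • ξ) lam
      = Measure.sum (fun h : M => μ {h} • Measure.map (fun ξ : B => (m * h) • ξ) lam) := by
    conv_lhs => rw [hstat]
    ext s hs
    rw [Measure.map_apply (hact m) hs, Measure.sum_apply _ ((hact m) hs),
      Measure.sum_apply _ hs]
    congr 1
    ext h
    rw [Measure.smul_apply, Measure.smul_apply,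
      Measure.map_apply (hact h) ((hact m) hs), Measure.map_apply (hact (m * h)) hs]
    congr 2
    ext ξ
    simp [mul_smul]
  -- rewrite the sum measure as a withDensity
  have hmeas : ∀ h : M,
      Measurable (fun ξ => μ {h} * (Measure.map (fun ξ : B => (m * h) • ξ) lam).rnDeriv lam ξ) :=
    fun h => (Measure.measurable_rnDeriv _ _).const_mul _
  have hwd : Measure.map (fun ξ : B => m • ξ) lam
      = lam.withDensity
        (fun ξ => ∑' h : M, μ {h} * (Measure.map (fun ξ : B => (m * h) • ξ) lam).rnDeriv lam ξ) := by
    rw [hmap]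
    have : (fun ξ => ∑' h : M, μ {h} * (Measure.map (fun ξ : B => (m * h) • ξ) lam).rnDeriv lam ξ)
        = ∑' h : M, (fun ξ => μ {h} * (Measure.map (fun ξ : B => (m * h) • ξ) lam).rnDeriv lam ξ) := by
      ext ξ
      rw [ENNReal.tsum_apply]
    rw [this, withDensity_tsum hmeas]
    congr 1
    ext h : 1
    calc μ {h} • Measure.map (fun ξ : B => (m * h) • ξ) lam
        = μ {h} • lam.withDensity ((Measure.map (fun ξ : B => (m * h) • ξ) lam).rnDeriv lam) := by
          rw [Measure.withDensity_rnDeriv_eq _ _ (habs (m * h))]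
      _ = lam.withDensity
            (fun ξ => μ {h} * (Measure.map (fun ξ : B => (m * h) • ξ) lam).rnDeriv lam ξ) := by
          rw [← withDensity_smul _ (Measure.measurable_rnDeriv _ _)]
          rfl
  have : IsProbabilityMeasure (Measure.map (fun ξ : B => m • ξ) lam) :=
    Measure.isProbabilityMeasure_map (hact m).aemeasurable
  have := Measure.rnDeriv_withDensity lam (f := fun ξ =>
    ∑' h : M, μ {h} * (Measure.map (fun ξ : B => (m * h) • ξ) lam).rnDeriv lam ξ)
    (Measurable.ennreal_tsum hmeas)
  rw [← hwd] at this
  exact this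
end Stmt18
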